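/- Let K̃ > 0 and let F ⊆ ℝⁿ be closed. Define F* := {x ∈ ℝⁿ : γ(F ∩ B(x,r)) ≥ (1/2)·γ(B(x,r)) for all r ∈ (0, K̃·m(x)]}. Then the complement of F* is contained in {x ∈ ℝⁿ : M*_{K̃}(1_{ℝⁿ∖F})(x) > 1/2}, and consequently γ(ℝⁿ∖F*) ≤ C γ(ℝⁿ∖F) with C depending only on K̃ and the dimension n. -/

import Mathlib

open MeasureTheory Metric Set
open scoped ENNReal NNReal BigOperators

noncomputable section

/-- The gaussian measure `dγ(x) = (2π)^{-n/2} exp(-|x|²/2) dx` on `ℝⁿ`. -/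
def gaussMeasure (n : ℕ) : Measure (EuclideanSpace ℝ (Fin n)) :=
  volume.withDensity fun x =>
    ENNReal.ofReal ((2 * Real.pi) ^ (-(n : ℝ) / 2) * Real.exp (-‖x‖ ^ 2 / 2))

/-- `m(x) = min {1, 1/‖x‖}`. -/
def mfun {n : ℕ} (x : EuclideanSpace ℝ (Fin n)) : ℝ :=
  if ‖x‖ ≤ 1 then 1 else ‖x‖⁻¹

/-- Ornstein–Uhlenbeck (Mehler) semigroup `e^{-tL} u (x)`. -/
def mehler (n : ℕ) (u : EuclideanSpace ℝ (Fin n) → ℝ) (t : ℝ)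
    (x : EuclideanSpace ℝ (Fin n)) : ℝ :=
  ∫ y, u (Real.exp (-t) • x + Real.sqrt (1 - Real.exp (-2 * t)) • y) ∂gaussMeasure n

/-- The gaussian conical square function `S_a u (x)`. -/
def Sfun (n : ℕ) (a : ℝ) (u : EuclideanSpace ℝ (Fin n) → ℝ)
    (x : EuclideanSpace ℝ (Fin n)) : ℝ≥0∞ :=
  (∫⁻ t in Set.Ioo (0 : ℝ) (a * mfun x),
      (∫⁻ y in ball x t,
        (gaussMeasure n (ball y t))⁻¹ *
          ENNReal.ofReal ((t * ‖fderiv ℝ (mehler n u (t ^ 2)) y‖) ^ 2) ∂gaussMeasure n) /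
        ENNReal.ofReal t) ^ (1 / 2 : ℝ)

/-- The gaussian non-tangential maximal function `T*_{(A,a)} u (x)`. -/
def Tstar (n : ℕ) (A a : ℝ) (u : EuclideanSpace ℝ (Fin n) → ℝ)
    (x : EuclideanSpace ℝ (Fin n)) : ℝ≥0∞ :=
  ⨆ (y : EuclideanSpace ℝ (Fin n)) (t : ℝ) (_ : dist y x < A * t) (_ : 0 < t)
      (_ : t < a * mfun x),
    ((gaussMeasure n (ball y (A * t)))⁻¹ *
        ∫⁻ z in ball y (A * t), ENNReal.ofReal ((mehler n u (t ^ 2) z) ^ 2) ∂gaussMeasure n) ^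
      (1 / 2 : ℝ)

/-- The admissible (gaussian) Hardy–Littlewood maximal function `M*_a f (x)`. -/
def Mstar (n : ℕ) (a : ℝ) (f : EuclideanSpace ℝ (Fin n) → ℝ)
    (x : EuclideanSpace ℝ (Fin n)) : ℝ≥0∞ :=
  ⨆ (r : ℝ) (_ : 0 < r) (_ : r ≤ a * mfun x),
    (gaussMeasure n (ball x r))⁻¹ *
      ∫⁻ y in ball x r, ENNReal.ofReal |f y| ∂gaussMeasure n

/-- The admissible cone `Γ^{(A,a)}_x(γ)`. -/
def cone (n : ℕ) (A a : ℝ) (x : EuclideanSpace ℝ (Fin n)) :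
    Set (EuclideanSpace ℝ (Fin n) × ℝ) :=
  {p | dist p.1 x < A * p.2 ∧ 0 < p.2 ∧ p.2 < a * mfun x}

/-- The modified admissible cone `Γ̃^{(A,a)}_x(γ)`. -/
def coneT (n : ℕ) (A a : ℝ) (x : EuclideanSpace ℝ (Fin n)) :
    Set (EuclideanSpace ℝ (Fin n) × ℝ) :=
  {p | dist p.1 x < A * p.2 ∧ 0 < p.2 ∧ p.2 < a * mfun p.1}

/-- The dyadic cube `2^{-k}(v + [0,1)ⁿ)` of scale `k`. -/
def dyadicCube (n k : ℕ) (v : Fin n → ℤ) : Set (EuclideanSpace ℝ (Fin n)) :=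
  {x | ∀ i, x i ∈ Set.Ico ((2 : ℝ) ^ (-(k : ℤ)) * v i) ((2 : ℝ) ^ (-(k : ℤ)) * (v i + 1))}

/-- The centre of the dyadic cube `2^{-k}(v + [0,1)ⁿ)`. -/
def cubeCenter (n k : ℕ) (v : Fin n → ℤ) : EuclideanSpace ℝ (Fin n) :=
  WithLp.toLp 2 (fun i => (2 : ℝ) ^ (-(k : ℤ)) * (v i + 1 / 2))

/-- The layers `L_0 = [-1,1)ⁿ`, `L_l = [-2^l,2^l)ⁿ \ [-2^{l-1},2^{l-1})ⁿ`. -/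
def layer (n : ℕ) : ℕ → Set (EuclideanSpace ℝ (Fin n))
  | 0 => {x | ∀ i, x i ∈ Set.Ico (-1 : ℝ) 1}
  | (l + 1) =>
      {x | ∀ i, x i ∈ Set.Ico (-(2 : ℝ) ^ (l + 1)) ((2 : ℝ) ^ (l + 1))} \
        {x | ∀ i, x i ∈ Set.Ico (-(2 : ℝ) ^ l) ((2 : ℝ) ^ l)}

/-- The cube `α ∘ Q` with the same centre as `Q = 2^{-k}(v + [0,1)ⁿ)` and `α` times
its side-length. -/
def scaledCube (n k : ℕ) (v : Fin n → ℤ) (α : ℝ) : Set (EuclideanSpace ℝ (Fin n)) :=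
  {x | ∀ i, x i ∈ Set.Ico (cubeCenter n k v i - α * (2 : ℝ) ^ (-(k : ℤ)) / 2)
      (cubeCenter n k v i + α * (2 : ℝ) ^ (-(k : ℤ)) / 2)}

/-- The Ornstein–Uhlenbeck operator `Lf(x) = -Δf(x) + x·∇f(x)`. -/
def OU (n : ℕ) (f : EuclideanSpace ℝ (Fin n) → ℂ) (x : EuclideanSpace ℝ (Fin n)) : ℂ :=
  -(∑ i : Fin n, iteratedFDeriv ℝ 2 f x ![EuclideanSpace.single i 1, EuclideanSpace.single i 1]) +
    fderiv ℝ f x x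


lemma mfun_le_one {n : ℕ} (x : EuclideanSpace ℝ (Fin n)) : mfun x ≤ 1 := by
  unfold mfun
  split
  · exact le_rfl
  · next h =>
    have h1 : (1:ℝ) ≤ ‖x‖ := le_of_not_ge h
    exact inv_le_one_of_one_le₀ h1

lemma gaussMeasure_ball_lt_top (n : ℕ) (x : EuclideanSpace ℝ (Fin n)) (r : ℝ) :
    gaussMeasure n (ball x r) < ⊤ := by
  have h : gaussMeasure n (ball x r)
      ≤ ENNReal.ofReal ((2 * Real.pi) ^ (-(n:ℝ)/2)) * volume (ball x r) := by
    rw [gaussMeasure, withDensity_apply _ measurableSet_ball]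
    calc ∫⁻ y in ball x r,
          ENNReal.ofReal ((2 * Real.pi) ^ (-(n : ℝ) / 2) * Real.exp (-‖y‖ ^ 2 / 2)) ∂volume
        ≤ ∫⁻ _ in ball x r, ENNReal.ofReal ((2 * Real.pi) ^ (-(n:ℝ)/2)) ∂volume := by
          refine lintegral_mono fun y => ENNReal.ofReal_le_ofReal ?_
          have h1 : Real.exp (-‖y‖ ^ 2 / 2) ≤ 1 := by
            rw [Real.exp_le_one_iff]
            nlinarith [sq_nonneg ‖y‖]
          have h2 : (0:ℝ) < (2 * Real.pi) ^ (-(n:ℝ)/2) := by positivity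
          nlinarith
      _ = _ := by rw [setLIntegral_const]
  exact h.trans_lt (ENNReal.mul_lt_top ENNReal.ofReal_lt_top measure_ball_lt_top)

lemma gaussMeasure_ball_pos (n : ℕ) (x : EuclideanSpace ℝ (Fin n)) (r : ℝ) (hr : 0 < r) :
    0 < gaussMeasure n (ball x r) := by
  set c := (2 * Real.pi) ^ (-(n:ℝ)/2) * Real.exp (-(‖x‖ + r) ^ 2 / 2) with hc
  have hcpos : 0 < c := by positivity
  have h : ENNReal.ofReal c * volume (ball x r) ≤ gaussMeasure n (ball x r) := by
    rw [gaussMeasure, withDensity_apply _ measurableSet_ball]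
    calc ENNReal.ofReal c * volume (ball x r)
        = ∫⁻ _ in ball x r, ENNReal.ofReal c ∂volume := (setLIntegral_const _ _).symm
      _ ≤ _ := by
        refine setLIntegral_mono' measurableSet_ball fun y hy => ENNReal.ofReal_le_ofReal ?_
        have hd : dist y x < r := mem_ball.mp hy
        have hny : ‖y‖ ≤ ‖x‖ + r := by
          have h1 : ‖y‖ - ‖x‖ ≤ ‖y - x‖ := norm_sub_norm_le y x
          have h2 : ‖y - x‖ = dist y x := (dist_eq_norm y x).symm
          linarith
        have hexp : Real.exp (-(‖x‖ + r) ^ 2 / 2) ≤ Real.exp (-‖y‖ ^ 2 / 2) := by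
          apply Real.exp_le_exp.mpr
          nlinarith [norm_nonneg y, norm_nonneg x, hr.le]
        have h2 : (0:ℝ) < (2 * Real.pi) ^ (-(n:ℝ)/2) := by positivity
        rw [hc]
        nlinarith
  refine lt_of_lt_of_le ?_ h
  exact ENNReal.mul_pos (ENNReal.ofReal_pos.mpr hcpos).ne' (measure_ball_pos volume x hr).ne'

/-- the complement of
`F* = {x : γ(F ∩ B(x,r)) ≥ ½ γ(B(x,r)) for all r ∈ (0, K̃·m(x)]}` is contained in
`{M*_{K̃}(1_{∁F}) > ½}`, and consequently `γ(∁F*) ≤ C γ(∁F)`. -/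
theorem Fstar_complement (n : ℕ) (Ktilde : ℝ) (hK : 0 < Ktilde) :
    ∃ C > (0 : ℝ), ∀ F : Set (EuclideanSpace ℝ (Fin n)), IsClosed F →
      ({x : EuclideanSpace ℝ (Fin n) | ∀ r ∈ Set.Ioc (0 : ℝ) (Ktilde * mfun x),
          gaussMeasure n (ball x r) / 2 ≤ gaussMeasure n (F ∩ ball x r)}ᶜ ⊆
        {x | (1 / 2 : ℝ≥0∞) < Mstar n Ktilde (Fᶜ.indicator fun _ => (1 : ℝ)) x}) ∧
      gaussMeasure n
          {x : EuclideanSpace ℝ (Fin n) | ∀ r ∈ Set.Ioc (0 : ℝ) (Ktilde * mfun x),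
            gaussMeasure n (ball x r) / 2 ≤ gaussMeasure n (F ∩ ball x r)}ᶜ ≤
        ENNReal.ofReal C * gaussMeasure n Fᶜ := by
  obtain ⟨N, τ, hτ, hSC⟩ :=
    HasBesicovitchCovering.no_satelliteConfig (α := EuclideanSpace ℝ (Fin n))
  refine ⟨2 * N + 1, by positivity, fun F hF => ?_⟩
  set E := {x : EuclideanSpace ℝ (Fin n) | ∀ r ∈ Set.Ioc (0 : ℝ) (Ktilde * mfun x),
      gaussMeasure n (ball x r) / 2 ≤ gaussMeasure n (F ∩ ball x r)}ᶜ with hEdef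
  -- extraction of a bad radius
  have hx : ∀ x ∈ E, ∃ r, 0 < r ∧ r ≤ Ktilde * mfun x ∧
      gaussMeasure n (F ∩ ball x r) < gaussMeasure n (ball x r) / 2 := by
    intro x hxE
    rw [hEdef, Set.mem_compl_iff, Set.mem_setOf_eq] at hxE
    push_neg at hxE
    obtain ⟨r, hr, hlt⟩ := hxE
    exact ⟨r, hr.1, hr.2, hlt⟩
  -- key inequality
  have key : ∀ (x : EuclideanSpace ℝ (Fin n)) (r : ℝ), 0 < r →
      gaussMeasure n (F ∩ ball x r) < gaussMeasure n (ball x r) / 2 →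
      gaussMeasure n (ball x r) / 2 < gaussMeasure n (Fᶜ ∩ ball x r) := by
    intro x r hr hlt
    by_contra h
    push_neg at h
    have hfin : gaussMeasure n (ball x r) / 2 ≠ ⊤ :=
      (ENNReal.div_lt_top (gaussMeasure_ball_lt_top n x r).ne (by norm_num)).ne
    have hsplit : gaussMeasure n (ball x r)
        ≤ gaussMeasure n (F ∩ ball x r) + gaussMeasure n (Fᶜ ∩ ball x r) := by
      have hcov : ball x r = (F ∩ ball x r) ∪ (Fᶜ ∩ ball x r) := by
        rw [← Set.union_inter_distrib_right, Set.union_compl_self, Set.univ_inter]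
      calc gaussMeasure n (ball x r) = gaussMeasure n ((F ∩ ball x r) ∪ (Fᶜ ∩ ball x r)) := by
            rw [← hcov]
        _ ≤ _ := measure_union_le _ _
    have : gaussMeasure n (ball x r) < gaussMeasure n (ball x r) := by
      calc gaussMeasure n (ball x r) ≤ _ := hsplit
        _ ≤ gaussMeasure n (F ∩ ball x r) + gaussMeasure n (ball x r) / 2 :=
            add_le_add le_rfl h
        _ < gaussMeasure n (ball x r) / 2 + gaussMeasure n (ball x r) / 2 :=
            ENNReal.add_lt_add_right hfin hlt
        _ = gaussMeasure n (ball x r) := ENNReal.add_halves _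
    exact lt_irrefl _ this
  constructor
  · -- inclusion into the maximal set
    intro x hxE
    obtain ⟨r, hr0, hrle, hlt⟩ := hx x hxE
    have hk := key x r hr0 hlt
    have hball0 : gaussMeasure n (ball x r) ≠ 0 := (gaussMeasure_ball_pos n x r hr0).ne'
    have hballT : gaussMeasure n (ball x r) ≠ ⊤ := (gaussMeasure_ball_lt_top n x r).ne
    have hint : ∫⁻ y in ball x r,
        ENNReal.ofReal |Fᶜ.indicator (fun _ => (1:ℝ)) y| ∂gaussMeasure n
        = gaussMeasure n (Fᶜ ∩ ball x r) := by
      have hfe : (fun y => ENNReal.ofReal |Fᶜ.indicator (fun _ => (1:ℝ)) y|)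
          = Fᶜ.indicator (fun _ => (1:ℝ≥0∞)) := by
        funext y
        by_cases hy : y ∈ Fᶜ <;> simp [Set.indicator, hy]
      rw [hfe, lintegral_indicator hF.measurableSet.compl, setLIntegral_one,
        Measure.restrict_apply hF.measurableSet.compl]
    rw [Set.mem_setOf_eq, Mstar]
    refine lt_of_lt_of_le ?_ (le_iSup_of_le r (le_iSup_of_le hr0 (le_iSup_of_le hrle le_rfl)))
    rw [hint]
    have h12 : (1/2:ℝ≥0∞)
        = (gaussMeasure n (ball x r))⁻¹ * (gaussMeasure n (ball x r) / 2) := by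
      rw [← mul_div_assoc, ENNReal.inv_mul_cancel hball0 hballT]
    rw [h12]
    exact (ENNReal.mul_lt_mul_iff_right (ENNReal.inv_ne_zero.mpr hballT)
      (ENNReal.inv_ne_top.mpr hball0)).mpr hk
  · -- measure bound via Besicovitch
    choose! rad hrad0 hradle hradlt using hx
    let p : Besicovitch.BallPackage E (EuclideanSpace ℝ (Fin n)) :=
      { c := fun x => (x : EuclideanSpace ℝ (Fin n))
        r := fun x => rad ↑x
        rpos := fun x => hrad0 ↑x x.2
        r_bound := Ktilde
        r_le := fun x => (hradle ↑x x.2).trans (by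
          have := mfun_le_one (x : EuclideanSpace ℝ (Fin n))
          nlinarith) }
    obtain ⟨s, hsdisj, hscov⟩ := Besicovitch.exist_disjoint_covering_families hτ hSC p
    have hEsub : E ⊆ ⋃ i, ⋃ j ∈ s i, ball (p.c j) (p.r j) := by
      intro x hxE
      exact hscov ⟨⟨x, hxE⟩, rfl⟩
    have famBound : ∀ i : Fin N,
        gaussMeasure n (⋃ j ∈ s i, ball (p.c j) (p.r j)) ≤ 2 * gaussMeasure n Fᶜ := by
      intro i
      have hcball : (s i).PairwiseDisjoint fun j => ball (p.c j) (p.r j) :=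
        (hsdisj i).mono fun j => ball_subset_closedBall
      have hcnt : (s i).Countable :=
        hcball.countable_of_isOpen (fun j _ => isOpen_ball)
          (fun j _ => ⟨p.c j, mem_ball_self (p.rpos j)⟩)
      have twoBound : ∀ j : E,
          gaussMeasure n (ball (p.c j) (p.r j)) ≤
            2 * gaussMeasure n (Fᶜ ∩ ball (p.c j) (p.r j)) := by
        intro j
        have h := key (p.c j) (p.r j) (p.rpos j) (hradlt ↑j j.2)
        calc gaussMeasure n (ball (p.c j) (p.r j))
            = 2 * (gaussMeasure n (ball (p.c j) (p.r j)) / 2) :=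
              (ENNReal.mul_div_cancel (by norm_num) (by norm_num)).symm
          _ ≤ 2 * gaussMeasure n (Fᶜ ∩ ball (p.c j) (p.r j)) := mul_le_mul_right h.le 2
      calc gaussMeasure n (⋃ j ∈ s i, ball (p.c j) (p.r j))
          = ∑' j : s i, gaussMeasure n (ball (p.c j) (p.r j)) :=
            measure_biUnion hcnt hcball (fun j _ => measurableSet_ball)
        _ ≤ ∑' j : s i, 2 * gaussMeasure n (Fᶜ ∩ ball (p.c (j:E)) (p.r (j:E))) :=
            ENNReal.tsum_le_tsum fun j => twoBound j
        _ = 2 * ∑' j : s i, gaussMeasure n (Fᶜ ∩ ball (p.c (j:E)) (p.r (j:E))) :=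
            ENNReal.tsum_mul_left
        _ = 2 * gaussMeasure n (⋃ j ∈ s i, Fᶜ ∩ ball (p.c j) (p.r j)) := by
            rw [measure_biUnion hcnt (hcball.mono fun j => inter_subset_right)
              (fun j _ => hF.measurableSet.compl.inter measurableSet_ball)]
        _ ≤ 2 * gaussMeasure n Fᶜ := by
            gcongr
            exact iUnion₂_subset fun j _ => inter_subset_left
    calc gaussMeasure n E ≤ gaussMeasure n (⋃ i, ⋃ j ∈ s i, ball (p.c j) (p.r j)) :=
          measure_mono hEsub
      _ ≤ ∑ i : Fin N, gaussMeasure n (⋃ j ∈ s i, ball (p.c j) (p.r j)) :=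
          measure_iUnion_fintype_le _ _
      _ ≤ ∑ _i : Fin N, 2 * gaussMeasure n Fᶜ := Finset.sum_le_sum fun i _ => famBound i
      _ = (N : ℝ≥0∞) * (2 * gaussMeasure n Fᶜ) := by
          rw [Finset.sum_const, Finset.card_univ, Fintype.card_fin, nsmul_eq_mul]
      _ ≤ ENNReal.ofReal (2 * N + 1) * gaussMeasure n Fᶜ := by
          rw [← mul_assoc]
          gcongr
          have h1 : ((N : ℝ≥0∞) * 2) = ((2 * N : ℕ) : ℝ≥0∞) := by push_cast; ring
          rw [h1, ← ENNReal.ofReal_natCast]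
          exact ENNReal.ofReal_le_ofReal (by push_cast; linarith)

end
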